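/- arXiv:1903.08914 — 6 statements merged into one kernel-verified Lean document; each statement's English description precedes it below -/
import Mathlib

section
/- Let n > 1 be an integer, N = n+1, fix y ∈ ℝ^N, and set λ = (n−1)/2. Define the ladder operator L on functions ℝ^N∖{0} → ℝ by (Lf)(x) = K[z ↦ ⟨y, ∇(K[f])(z)⟩](x), i.e. L = K∘⟨y,∇_x⟩∘K. Then for every k ∈ ℕ and every x ∈ ℝ^N∖{0}, the k-fold iterate of L applied to the constant function 1 satisfies (L^k[1])(x) = (−1)^k · k! · C_k^λ(w) · (‖x‖‖y‖)^k. -/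
open scoped RealInnerProductSpace

/-- The Kelvin inversion `K[f](x) = ‖x‖^(2-N) f(x/‖x‖²)` in `ℝ^N`. -/
noncomputable def kelvin {N : ℕ} (f : EuclideanSpace ℝ (Fin N) → ℝ)
    (x : EuclideanSpace ℝ (Fin N)) : ℝ :=
  ‖x‖ ^ ((2 : ℝ) - N) * f ((‖x‖ ^ 2)⁻¹ • x)

/-- The Gegenbauer polynomial `C_k^λ(z)` given by its explicit sum. -/
noncomputable def gegenbauer (k : ℕ) (l : ℝ) (z : ℝ) : ℝ :=
  ∑ j ∈ Finset.range (k / 2 + 1),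
    (-1 : ℝ) ^ j * (Real.Gamma ((k : ℝ) - j + l) /
      (Real.Gamma l * (Nat.factorial j) * (Nat.factorial (k - 2 * j)))) * (2 * z) ^ (k - 2 * j)

/-- The ladder operator `L = K ∘ ⟨y, ∇_x⟩ ∘ K`. -/
noncomputable def ladder {N : ℕ} (y : EuclideanSpace ℝ (Fin N))
    (f : EuclideanSpace ℝ (Fin N) → ℝ) : EuclideanSpace ℝ (Fin N) → ℝ :=
  kelvin (fun z => fderiv ℝ (kelvin f) z y)

noncomputable def gegDeriv (k : ℕ) (l : ℝ) (z : ℝ) : ℝ :=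
  ∑ j ∈ Finset.range (k / 2 + 1),
    (-1 : ℝ) ^ j * (Real.Gamma ((k : ℝ) - j + l) /
      (Real.Gamma l * (Nat.factorial j) * (Nat.factorial (k - 2 * j)))) *
      (((k : ℝ) - 2 * j) * 2 * (2 * z) ^ (k - 2 * j - 1))

theorem hasDerivAt_mul_pow (c : ℝ) (m : ℕ) (z : ℝ) :
    HasDerivAt (fun z : ℝ => c * (2 * z) ^ m) (c * ((m : ℝ) * 2 * (2 * z) ^ (m - 1))) z := by
  have h1 : HasDerivAt (fun z : ℝ => 2 * z) 2 z := by
    simpa using (hasDerivAt_id z).const_mul 2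
  have h3 := ((hasDerivAt_pow m (2 * z)).comp z h1).const_mul c
  exact h3.congr_deriv (by ring)

theorem hasDerivAt_gegenbauer (k : ℕ) (l : ℝ) (z : ℝ) :
    HasDerivAt (fun z => gegenbauer k l z) (gegDeriv k l z) z := by
  unfold gegenbauer gegDeriv
  apply HasDerivAt.fun_sum
  intro j hj
  have hjk : 2 * j ≤ k := by
    have := Finset.mem_range.mp hj; omega
  have h2 := hasDerivAt_mul_pow ((-1 : ℝ) ^ j * (Real.Gamma ((k : ℝ) - j + l) /
      (Real.Gamma l * (Nat.factorial j) * (Nat.factorial (k - 2 * j))))) (k - 2 * j) z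
  exact h2.congr_deriv (by push_cast [hjk]; ring)

noncomputable def gegCoef (l : ℝ) (k j : ℕ) : ℝ :=
  (-1 : ℝ) ^ j * (Real.Gamma ((k : ℝ) - j + l) /
      (Real.Gamma l * (Nat.factorial j) * (Nat.factorial (k - 2 * j))))

lemma coef_main (l : ℝ) (hl : 0 < l) (i d : ℕ) :
    (l + (2*i+2+d : ℕ) - ((i:ℝ)+1)) * gegCoef l (2*i+2+d) (i+1)
      - 2 * (((2*i+2+d : ℕ) : ℝ) - 2*((i:ℝ)+1) + 2) * gegCoef l (2*i+2+d) i
    = (((2*i+2+d : ℕ) : ℝ) + 1) * gegCoef l (2*i+2+d+1) (i+1) := by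
  unfold gegCoef
  have h1 : 2*i+2+d - 2*(i+1) = d := by omega
  have h2 : 2*i+2+d - 2*i = d + 2 := by omega
  have h3 : 2*i+2+d+1 - 2*(i+1) = d + 1 := by omega
  rw [h1, h2, h3]
  set X : ℝ := (i : ℝ) + d + l with hX
  have e1 : ((2*i+2+d : ℕ) : ℝ) - ((i:ℕ)+1 : ℕ) + l = X + 1 := by push_cast; ring
  have e1' : ((2*i+2+d : ℕ) : ℝ) - ((i+1 : ℕ) : ℝ) + l = X + 1 := by push_cast; ring
  have e2 : ((2*i+2+d : ℕ) : ℝ) - (i : ℝ) + l = X + 2 := by push_cast; ring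
  have e3 : ((2*i+2+d+1 : ℕ) : ℝ) - ((i+1 : ℕ) : ℝ) + l = X + 2 := by push_cast; ring
  rw [e1, e2, e3]
  have hXpos : 0 < X + 1 := by positivity
  have hg : Real.Gamma (X + 2) = (X + 1) * Real.Gamma (X + 1) := by
    rw [show X + 2 = (X + 1) + 1 by ring, Real.Gamma_add_one hXpos.ne']
  rw [hg]
  have hgl : Real.Gamma l ≠ 0 := (Real.Gamma_pos_of_pos hl).ne'
  have hfact : ∀ m : ℕ, ((Nat.factorial m : ℝ)) ≠ 0 := fun m => by
    exact_mod_cast (Nat.factorial_pos m).ne'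
  rw [Nat.factorial_succ (i), Nat.factorial_succ (d+1), Nat.factorial_succ d]
  push_cast
  field_simp
  ring

lemma coef_main' (l : ℝ) (hl : 0 < l) (k j : ℕ) (hj1 : 1 ≤ j) (hj2 : 2*j ≤ k) :
    (l + (k:ℝ) - j) * gegCoef l k j - 2 * ((k:ℝ) - 2*(j:ℝ) + 2) * gegCoef l k (j-1)
      = ((k:ℝ) + 1) * gegCoef l (k+1) j := by
  obtain ⟨i, rfl⟩ : ∃ i, j = i + 1 := ⟨j - 1, by omega⟩
  obtain ⟨d, rfl⟩ : ∃ d, k = 2*i+2+d := ⟨k - (2*i+2), by omega⟩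
  have h := coef_main l hl i d
  have hs : (i + 1) - 1 = i := by omega
  rw [hs]
  push_cast at h ⊢
  linear_combination h

lemma coef_zero (l : ℝ) (hl : 0 < l) (k : ℕ) :
    (l + (k:ℝ) - 0) * gegCoef l k 0 = ((k:ℝ) + 1) * gegCoef l (k+1) 0 := by
  unfold gegCoef
  simp only [pow_zero, Nat.cast_zero, Nat.sub_zero, Nat.mul_zero, Nat.factorial]
  have e1 : (k:ℝ) - 0 + l = (k:ℝ) + l := by ring
  have e2 : ((k+1 : ℕ):ℝ) - 0 + l = ((k:ℝ) + l) + 1 := by push_cast; ring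
  rw [e1, e2, Real.Gamma_add_one (by positivity)]
  have hgl : Real.Gamma l ≠ 0 := (Real.Gamma_pos_of_pos hl).ne'
  have h0 : k - 2*0 = k := by omega
  have h1 : k + 1 - 2*0 = k+1 := by omega
  have hfk : ((Nat.factorial k : ℝ)) ≠ 0 := by exact_mod_cast (Nat.factorial_pos k).ne'
  push_cast [Nat.succ_eq_add_one]
  field_simp
  ring

lemma coef_edge (l : ℝ) (hl : 0 < l) (m : ℕ) :
    (((2*m+1 : ℕ):ℝ) + 1) * gegCoef l (2*m+1+1) (m+1)
      + 2 * (((2*m+1 : ℕ):ℝ) - 2*((m:ℝ)+1) + 2) * gegCoef l (2*m+1) m = 0 := by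
  unfold gegCoef
  have h1 : 2*m+1+1 - 2*(m+1) = 0 := by omega
  have h2 : 2*m+1 - 2*m = 1 := by omega
  rw [h1, h2]
  have e1 : ((2*m+1+1 : ℕ):ℝ) - ((m+1 : ℕ):ℝ) + l = ((m:ℝ) + 1) + l := by push_cast; ring
  have e2 : ((2*m+1 : ℕ):ℝ) - (m:ℝ) + l = ((m:ℝ) + 1) + l := by push_cast; ring
  rw [e1, e2]
  have hgl : Real.Gamma l ≠ 0 := (Real.Gamma_pos_of_pos hl).ne'
  rw [Nat.factorial_succ m]
  have hfm : ((Nat.factorial m : ℝ)) ≠ 0 := by exact_mod_cast (Nat.factorial_pos m).ne'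
  simp only [Nat.factorial]
  push_cast
  field_simp
  ring

theorem geg_key (l : ℝ) (hl : 0 < l) (k : ℕ) (z : ℝ) :
    (2*l + (k:ℝ)) * z * gegenbauer k l z - (1 - z^2) * gegDeriv k l z
      = ((k:ℝ) + 1) * gegenbauer (k+1) l z := by
  have step1 :
      (2*l + (k:ℝ)) * z * gegenbauer k l z - (1 - z^2) * gegDeriv k l z
        = (∑ j ∈ Finset.range (k/2+1),
            (l + (k:ℝ) - j) * gegCoef l k j * (2*z)^(k+1-2*j))
          - ∑ j ∈ Finset.range (k/2+1),
            2 * ((k:ℝ) - 2*((j:ℝ)+1) + 2) * gegCoef l k j * (2*z)^(k+1-2*(j+1)) := by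
    unfold gegenbauer gegDeriv
    rw [Finset.mul_sum, Finset.mul_sum, ← Finset.sum_sub_distrib, ← Finset.sum_sub_distrib]
    apply Finset.sum_congr rfl
    intro j hj
    have hjk : 2*j ≤ k := by have := Finset.mem_range.mp hj; omega
    show (2*l + (k:ℝ)) * z * (gegCoef l k j * (2*z)^(k-2*j))
        - (1 - z^2) * (gegCoef l k j * (((k:ℝ) - 2*j)*2*(2*z)^(k-2*j-1))) = _
    rcases Nat.eq_zero_or_pos (k - 2*j) with hm | hm
    · have hk2j : (k:ℝ) = 2*(j:ℝ) := by
        have : k = 2*j := by omega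
        rw [this]; push_cast; ring
      have e1 : k - 2*j = 0 := hm
      have e2 : k - 2*j - 1 = 0 := by omega
      have e3 : k + 1 - 2*j = 1 := by omega
      have e4 : k + 1 - 2*(j+1) = 0 := by omega
      rw [e2, e3, e4, e1, hk2j]
      ring
    · obtain ⟨m, rfl⟩ : ∃ m, k = 2*j + m + 1 := ⟨k - 2*j - 1, by omega⟩
      have e1 : 2*j + m + 1 - 2*j = m + 1 := by omega
      have e2 : 2*j + m + 1 - 2*j - 1 = m := by omega
      have e3 : 2*j + m + 1 + 1 - 2*j = m + 2 := by omega
      have e4 : 2*j + m + 1 + 1 - 2*(j+1) = m := by omega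
      rw [e2, e3, e4, e1]
      have : ((2*j + m + 1 : ℕ) : ℝ) = 2*(j:ℝ) + (m:ℝ) + 1 := by push_cast; ring
      rw [this, pow_succ, show m + 2 = (m+1)+1 from rfl, pow_succ, pow_succ]
      ring
  rw [step1]
  have hRHS : ((k:ℝ) + 1) * gegenbauer (k+1) l z
      = ∑ j ∈ Finset.range ((k+1)/2+1),
          ((k:ℝ) + 1) * gegCoef l (k+1) j * (2*z)^(k+1-2*j) := by
    unfold gegenbauer
    rw [Finset.mul_sum]
    apply Finset.sum_congr rfl
    intro j hj
    show ((k:ℝ)+1) * (gegCoef l (k+1) j * (2*z)^(k+1-2*j)) = _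
    ring
  rw [hRHS]
  have hmain : ∀ j : ℕ, 2*(j+1) ≤ k →
      (l + (k:ℝ) - ((j+1 : ℕ):ℝ)) * gegCoef l k (j+1) * (2*z)^(k+1-2*(j+1))
        - 2 * ((k:ℝ) - 2*((j:ℝ)+1) + 2) * gegCoef l k j * (2*z)^(k+1-2*(j+1))
      = ((k:ℝ) + 1) * gegCoef l (k+1) (j+1) * (2*z)^(k+1-2*(j+1)) := by
    intro j hj
    have h := coef_main' l hl k (j+1) (by omega) hj
    rw [show (j+1) - 1 = j from rfl] at h
    have hc : ((j+1 : ℕ):ℝ) = (j:ℝ) + 1 := by push_cast; ring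
    rw [hc] at h ⊢
    linear_combination h * (2*z)^(k+1-2*(j+1))
  have hzero : (l + (k:ℝ) - ((0:ℕ):ℝ)) * gegCoef l k 0 * (2*z)^(k+1-2*0)
      = ((k:ℝ) + 1) * gegCoef l (k+1) 0 * (2*z)^(k+1-2*0) := by
    have h := coef_zero l hl k
    rw [show k+1-2*0 = k+1 by omega]
    push_cast at h ⊢
    linear_combination h * (2*z)^(k+1)
  rcases Nat.even_or_odd k with ⟨m, rfl⟩ | ⟨m, rfl⟩
  · -- k = m + m
    have hr1 : (m+m)/2 + 1 = m + 1 := by omega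
    have hr2 : (m+m+1)/2 + 1 = m + 1 := by omega
    rw [hr1, hr2]
    rw [Finset.sum_range_succ (fun j => 2 * (((m+m : ℕ):ℝ) - 2*((j:ℝ)+1) + 2) * gegCoef l (m+m) j * (2*z)^(m+m+1-2*(j+1))) m]
    have hlast : 2 * (((m+m : ℕ):ℝ) - 2*((m:ℝ)+1) + 2) * gegCoef l (m+m) m * (2*z)^(m+m+1-2*(m+1)) = 0 := by
      have : ((m+m : ℕ):ℝ) - 2*((m:ℝ)+1) + 2 = 0 := by push_cast; ring
      rw [this]; ring
    rw [hlast, add_zero]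
    rw [Finset.sum_range_succ' (fun j => (l + ((m+m : ℕ):ℝ) - j) * gegCoef l (m+m) j * (2*z)^(m+m+1-2*j)) m]
    rw [Finset.sum_range_succ' (fun j => (((m+m : ℕ):ℝ) + 1) * gegCoef l (m+m+1) j * (2*z)^(m+m+1-2*j)) m]
    have hsum : ∑ j ∈ Finset.range m,
        ((l + ((m+m : ℕ):ℝ) - ((j+1 : ℕ):ℝ)) * gegCoef l (m+m) (j+1) * (2*z)^(m+m+1-2*(j+1))
          - 2 * (((m+m : ℕ):ℝ) - 2*((j:ℝ)+1) + 2) * gegCoef l (m+m) j * (2*z)^(m+m+1-2*(j+1)))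
        = ∑ j ∈ Finset.range m,
          (((m+m : ℕ):ℝ) + 1) * gegCoef l (m+m+1) (j+1) * (2*z)^(m+m+1-2*(j+1)) := by
      apply Finset.sum_congr rfl
      intro j hj
      have hjm : j < m := Finset.mem_range.mp hj
      exact hmain j (by omega)
    rw [Finset.sum_sub_distrib] at hsum
    push_cast at hsum hzero ⊢
    linarith [hsum, hzero]
  · -- k = 2*m + 1
    have hr1 : (2*m+1)/2 + 1 = m + 1 := by omega
    have hr2 : (2*m+1+1)/2 + 1 = m + 2 := by omega
    rw [hr1, hr2]
    rw [Finset.sum_range_succ (fun j => 2 * (((2*m+1 : ℕ):ℝ) - 2*((j:ℝ)+1) + 2) * gegCoef l (2*m+1) j * (2*z)^(2*m+1+1-2*(j+1))) m]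
    rw [Finset.sum_range_succ (fun j => (((2*m+1 : ℕ):ℝ) + 1) * gegCoef l (2*m+1+1) j * (2*z)^(2*m+1+1-2*j)) (m+1)]
    have hedge : (((2*m+1 : ℕ):ℝ) + 1) * gegCoef l (2*m+1+1) (m+1) * (2*z)^(2*m+1+1-2*(m+1))
        = - (2 * (((2*m+1 : ℕ):ℝ) - 2*((m:ℝ)+1) + 2) * gegCoef l (2*m+1) m * (2*z)^(2*m+1+1-2*(m+1))) := by
      have h := coef_edge l hl m
      have e0 : 2*m+1+1-2*(m+1) = 0 := by omega
      rw [e0, pow_zero]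
      linarith [h]
    rw [Finset.sum_range_succ' (fun j => (l + ((2*m+1 : ℕ):ℝ) - j) * gegCoef l (2*m+1) j * (2*z)^(2*m+1+1-2*j)) m]
    rw [Finset.sum_range_succ' (fun j => (((2*m+1 : ℕ):ℝ) + 1) * gegCoef l (2*m+1+1) j * (2*z)^(2*m+1+1-2*j)) m]
    have hsum : ∑ j ∈ Finset.range m,
        ((l + ((2*m+1 : ℕ):ℝ) - ((j+1 : ℕ):ℝ)) * gegCoef l (2*m+1) (j+1) * (2*z)^(2*m+1+1-2*(j+1))
          - 2 * (((2*m+1 : ℕ):ℝ) - 2*((j:ℝ)+1) + 2) * gegCoef l (2*m+1) j * (2*z)^(2*m+1+1-2*(j+1)))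
        = ∑ j ∈ Finset.range m,
          (((2*m+1 : ℕ):ℝ) + 1) * gegCoef l (2*m+1+1) (j+1) * (2*z)^(2*m+1+1-2*(j+1)) := by
      apply Finset.sum_congr rfl
      intro j hj
      have hjm : j < m := Finset.mem_range.mp hj
      exact hmain j (by omega)
    rw [Finset.sum_sub_distrib] at hsum
    push_cast at hsum hzero hedge ⊢
    linarith [hsum, hzero, hedge]

variable {E : Type*} [NormedAddCommGroup E] [InnerProductSpace ℝ E]

theorem hasFDerivAt_norm' (z : E) (hz : z ≠ 0) :
    HasFDerivAt (fun z : E => ‖z‖) (‖z‖⁻¹ • innerSL ℝ z) z := by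
  have hz' : ‖z‖ ≠ 0 := norm_ne_zero_iff.mpr hz
  have h2 : HasFDerivAt (fun x : E => ‖x‖ ^ 2) (2 • (innerSL ℝ z)) z :=
    (hasStrictFDerivAt_norm_sq z).hasFDerivAt
  have hs : HasDerivAt Real.sqrt (1 / (2 * Real.sqrt (‖z‖ ^ 2))) (‖z‖ ^ 2) :=
    Real.hasDerivAt_sqrt (by positivity)
  have h3 := hs.comp_hasFDerivAt z h2
  have h4 : HasFDerivAt (fun x : E => ‖x‖)
      ((1 / (2 * Real.sqrt (‖z‖ ^ 2))) • (2 • (innerSL ℝ z))) z := by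
    refine h3.congr_of_eventuallyEq ?_
    filter_upwards with x
    simp [Real.sqrt_sq (norm_nonneg x)]
  convert h4 using 1
  rw [Real.sqrt_sq (norm_nonneg z)]
  ext v
  simp [smul_smul]
  ring

theorem fderiv_H {E : Type*} [NormedAddCommGroup E] [InnerProductSpace ℝ E]
    (k : ℕ) (l a c : ℝ) (y z : E) (hy : y ≠ 0) (hz : z ≠ 0) :
    fderiv ℝ (fun z : E => c * gegenbauer k l (⟪z, y⟫ / (‖z‖ * ‖y‖)) * ‖z‖ ^ a) z y
      = c * (‖z‖ ^ (a - 1) * ‖y‖) *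
        ((1 - (⟪z, y⟫ / (‖z‖ * ‖y‖)) ^ 2) * gegDeriv k l (⟪z, y⟫ / (‖z‖ * ‖y‖))
          + a * (⟪z, y⟫ / (‖z‖ * ‖y‖)) * gegenbauer k l (⟪z, y⟫ / (‖z‖ * ‖y‖))) := by
  have hz' : ‖z‖ ≠ 0 := norm_ne_zero_iff.mpr hz
  have hy' : ‖y‖ ≠ 0 := norm_ne_zero_iff.mpr hy
  have ht : HasFDerivAt (fun z : E => ⟪z, y⟫) (innerSL ℝ y) z := by
    refine (innerSL ℝ y).hasFDerivAt.congr_of_eventuallyEq ?_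
    filter_upwards with u
    exact (real_inner_comm u y).symm
  have hr := hasFDerivAt_norm' z hz
  have hden : HasFDerivAt (fun z : E => ‖z‖ * ‖y‖) (‖y‖ • (‖z‖⁻¹ • innerSL ℝ z)) z :=
    hr.mul_const ‖y‖
  have hne : ‖z‖ * ‖y‖ ≠ 0 := mul_ne_zero hz' hy'
  have hinv := (hasDerivAt_inv hne).comp_hasFDerivAt z hden
  have hw := ht.mul hinv
  simp only [div_eq_mul_inv]
  have hP := (hasDerivAt_gegenbauer k l (⟪z, y⟫ * (‖z‖ * ‖y‖)⁻¹)).comp_hasFDerivAt z hw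
  have hra : HasFDerivAt (fun z : E => ‖z‖ ^ a)
      ((a * ‖z‖ ^ (a - 1)) • (‖z‖⁻¹ • innerSL ℝ z)) z :=
    (Real.hasDerivAt_rpow_const (Or.inl hz')).comp_hasFDerivAt z hr
  have hprod := (hP.const_mul c).mul hra
  simp only [Function.comp_def, Pi.mul_apply] at hprod
  rw [show fderiv ℝ (fun z : E => c * gegenbauer k l (⟪z, y⟫ * (‖z‖ * ‖y‖)⁻¹) * ‖z‖ ^ a) z = _ from hprod.fderiv]
  simp only [ContinuousLinearMap.add_apply, ContinuousLinearMap.smul_apply,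
    ContinuousLinearMap.coe_smul', Pi.smul_apply, innerSL_apply_apply, smul_eq_mul,
    ContinuousLinearMap.coe_sub', Pi.sub_apply]
  rw [Real.rpow_sub_one hz']
  rw [real_inner_self_eq_norm_sq]
  field_simp
  ring

section Kelvin

variable {N : ℕ}

lemma kelvin_congr (hN : (2 : ℝ) - (N:ℝ) ≠ 0) {f g : EuclideanSpace ℝ (Fin N) → ℝ}
    (h : ∀ z : EuclideanSpace ℝ (Fin N), z ≠ 0 → f z = g z) : kelvin f = kelvin g := by
  funext z
  unfold kelvin
  rcases eq_or_ne z 0 with rfl | hz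
  · rw [norm_zero, Real.zero_rpow hN, zero_mul, zero_mul]
  · rw [h _ (smul_ne_zero (inv_ne_zero (pow_ne_zero 2 (norm_ne_zero_iff.mpr hz))) hz)]

lemma ladder_congr (hN : (2 : ℝ) - (N:ℝ) ≠ 0) (y : EuclideanSpace ℝ (Fin N))
    {f g : EuclideanSpace ℝ (Fin N) → ℝ}
    (h : ∀ z : EuclideanSpace ℝ (Fin N), z ≠ 0 → f z = g z) : ladder y f = ladder y g := by
  unfold ladder
  rw [kelvin_congr hN h]

lemma ladder_zero (f : EuclideanSpace ℝ (Fin N) → ℝ) :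
    ladder (0 : EuclideanSpace ℝ (Fin N)) f = fun _ => 0 := by
  unfold ladder kelvin
  funext x
  simp

lemma norm_star_kelvin {z : EuclideanSpace ℝ (Fin N)} (hz : z ≠ 0) :
    ‖(‖z‖ ^ 2)⁻¹ • z‖ = ‖z‖⁻¹ := by
  have hz' : ‖z‖ ≠ 0 := norm_ne_zero_iff.mpr hz
  rw [norm_smul, Real.norm_eq_abs, abs_of_nonneg (by positivity)]
  field_simp

lemma w_star {z y : EuclideanSpace ℝ (Fin N)} (hz : z ≠ 0) :
    ⟪(‖z‖ ^ 2)⁻¹ • z, y⟫ / (‖(‖z‖ ^ 2)⁻¹ • z‖ * ‖y‖) = ⟪z, y⟫ / (‖z‖ * ‖y‖) := by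
  have hz' : ‖z‖ ≠ 0 := norm_ne_zero_iff.mpr hz
  rw [norm_star_kelvin hz, real_inner_smul_left]
  rcases eq_or_ne ‖y‖ 0 with hy | hy
  · rw [hy, mul_zero, mul_zero, div_zero, div_zero]
  · field_simp

end Kelvin

section Main

variable {n : ℕ} (hn : 1 < n) (y : EuclideanSpace ℝ (Fin (n+1)))

/-- `G k` : the claimed value of `L^k[1]`. -/
noncomputable def gfun (n : ℕ) (y : EuclideanSpace ℝ (Fin (n+1))) (k : ℕ) :
    EuclideanSpace ℝ (Fin (n+1)) → ℝ := fun z =>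
  (-1 : ℝ) ^ k * (Nat.factorial k) *
    gegenbauer k (((n : ℝ) - 1) / 2) (⟪z, y⟫ / (‖z‖ * ‖y‖)) * (‖z‖ * ‖y‖) ^ k

/-- `H k = K[G k]`. -/
noncomputable def hfun (n : ℕ) (y : EuclideanSpace ℝ (Fin (n+1))) (k : ℕ) :
    EuclideanSpace ℝ (Fin (n+1)) → ℝ := fun z =>
  ((-1 : ℝ) ^ k * (Nat.factorial k) * ‖y‖ ^ k) *
    gegenbauer k (((n : ℝ) - 1) / 2) (⟪z, y⟫ / (‖z‖ * ‖y‖)) *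
    ‖z‖ ^ ((2 : ℝ) - ((n+1 : ℕ) : ℝ) - k)

lemma kelvin_gfun (hn : 1 < n) (k : ℕ) : kelvin (gfun n y k) = hfun n y k := by
  have hNk : (2 : ℝ) - ((n+1 : ℕ) : ℝ) - (k : ℕ) ≠ 0 := by
    push_cast
    have : (2:ℝ) ≤ n := by exact_mod_cast hn
    have : (0:ℝ) ≤ k := Nat.cast_nonneg k
    linarith
  have hN : (2 : ℝ) - ((n+1 : ℕ) : ℝ) ≠ 0 := by
    push_cast
    have : (2:ℝ) ≤ n := by exact_mod_cast hn
    linarith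
  funext z
  unfold kelvin gfun hfun
  rcases eq_or_ne z 0 with rfl | hz
  · rw [norm_zero, Real.zero_rpow hN, Real.zero_rpow hNk]
    ring
  · have hz' : ‖z‖ ≠ 0 := norm_ne_zero_iff.mpr hz
    have hzpos : 0 < ‖z‖ := norm_pos_iff.mpr hz
    rw [w_star hz, norm_star_kelvin hz]
    have hexp : ‖z‖ ^ ((2 : ℝ) - ((n+1 : ℕ) : ℝ) - k)
        = ‖z‖ ^ ((2 : ℝ) - ((n+1 : ℕ) : ℝ)) * (‖z‖⁻¹) ^ k := by
      rw [sub_eq_add_neg ((2 : ℝ) - ((n+1 : ℕ) : ℝ)), Real.rpow_add hzpos,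
        Real.rpow_neg (le_of_lt hzpos), Real.rpow_natCast, inv_pow]
    rw [hexp]
    ring

lemma ladder_step (hn : 1 < n) (hy : y ≠ 0) (k : ℕ) {x : EuclideanSpace ℝ (Fin (n+1))}
    (hx : x ≠ 0) : ladder y (gfun n y k) x = gfun n y (k+1) x := by
  have hl : 0 < ((n : ℝ) - 1) / 2 := by
    have : (2:ℝ) ≤ n := by exact_mod_cast hn
    linarith
  have hx' : ‖x‖ ≠ 0 := norm_ne_zero_iff.mpr hx
  have hxpos : 0 < ‖x‖ := norm_pos_iff.mpr hx
  have hxs : (‖x‖ ^ 2)⁻¹ • x ≠ 0 :=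
    smul_ne_zero (inv_ne_zero (pow_ne_zero 2 hx')) hx
  unfold ladder
  rw [kelvin_gfun y hn k]
  unfold kelvin
  have hH : (fun z : EuclideanSpace ℝ (Fin (n+1)) =>
      ((-1 : ℝ) ^ k * (Nat.factorial k) * ‖y‖ ^ k) *
      gegenbauer k (((n : ℝ) - 1) / 2) (⟪z, y⟫ / (‖z‖ * ‖y‖)) *
      ‖z‖ ^ ((2 : ℝ) - ((n+1 : ℕ) : ℝ) - k)) = hfun n y k := rfl
  rw [← hH]
  beta_reduce
  rw [fderiv_H k (((n : ℝ) - 1) / 2) ((2 : ℝ) - ((n+1 : ℕ) : ℝ) - k)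
    ((-1 : ℝ) ^ k * (Nat.factorial k) * ‖y‖ ^ k) y _ hy hxs]
  rw [w_star hx, norm_star_kelvin hx]
  set w := ⟪x, y⟫ / (‖x‖ * ‖y‖) with hw
  set l := ((n : ℝ) - 1) / 2 with hldef
  have hkey := geg_key l hl k w
  have e1 : (‖x‖⁻¹) ^ ((2 : ℝ) - ((n+1 : ℕ) : ℝ) - k - 1)
      = ‖x‖ ^ (-((2 : ℝ) - ((n+1 : ℕ) : ℝ) - (k:ℝ) - 1)) := by
    rw [Real.inv_rpow (norm_nonneg x), ← Real.rpow_neg (norm_nonneg x)]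
  have hcomb : (1 - w^2) * gegDeriv k l w
        + ((2 : ℝ) - ((n+1 : ℕ) : ℝ) - (k:ℝ)) * w * gegenbauer k l w
      = -((k:ℝ)+1) * gegenbauer (k+1) l w := by
    have ha : (2:ℝ) - ((n+1:ℕ):ℝ) - (k:ℝ) = -(2*l + (k:ℝ)) := by
      rw [hldef]; push_cast; ring
    rw [ha]; linear_combination -hkey
  have huv : ‖x‖ ^ ((2:ℝ) - ((n+1 : ℕ) : ℝ)) * ‖x‖ ^ (-((2:ℝ) - ((n+1 : ℕ) : ℝ) - (k:ℝ) - 1))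
      = ‖x‖ ^ (k+1 : ℕ) := by
    rw [← Real.rpow_natCast ‖x‖ (k+1), ← Real.rpow_add hxpos]
    congr 1
    push_cast; ring
  rw [e1, hcomb]
  unfold gfun
  rw [Nat.factorial_succ]
  push_cast at huv ⊢
  linear_combination ((-1:ℝ))^k * (Nat.factorial k) * ‖y‖^k * ‖y‖ * (-((k:ℝ)+1))
    * gegenbauer (k+1) l w * huv

end Main

lemma gegenbauer_zero' (l : ℝ) (hl : 0 < l) (v : ℝ) : gegenbauer 0 l v = 1 := by
  unfold gegenbauer
  simp [Real.Gamma_pos_of_pos hl, (Real.Gamma_pos_of_pos hl).ne']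

/-- `(L^k[1])(x) = (-1)^k k! C_k^λ(w) (‖x‖‖y‖)^k` with `λ = (n-1)/2`. -/
theorem stmt1 (n : ℕ) (hn : 1 < n) (y : EuclideanSpace ℝ (Fin (n + 1))) (k : ℕ)
    (x : EuclideanSpace ℝ (Fin (n + 1))) (hx : x ≠ 0) :
    (ladder y)^[k] (fun _ => (1 : ℝ)) x =
      (-1 : ℝ) ^ k * (Nat.factorial k) *
        gegenbauer k (((n : ℝ) - 1) / 2) (⟪x, y⟫ / (‖x‖ * ‖y‖)) * (‖x‖ * ‖y‖) ^ k := by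
  have hl : 0 < ((n : ℝ) - 1) / 2 := by
    have : (2:ℝ) ≤ n := by exact_mod_cast hn
    linarith
  have hN : (2 : ℝ) - ((n+1 : ℕ):ℝ) ≠ 0 := by
    push_cast
    have : (2:ℝ) ≤ n := by exact_mod_cast hn
    linarith
  rcases eq_or_ne y 0 with rfl | hy
  · cases k with
    | zero => simp [gegenbauer_zero' _ hl]
    | succ j =>
        rw [Function.iterate_succ_apply', ladder_zero]
        simp
  · have main : ∀ k : ℕ, ∀ x : EuclideanSpace ℝ (Fin (n+1)), x ≠ 0 →
        (ladder y)^[k] (fun _ => (1:ℝ)) x = gfun n y k x := by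
      intro k
      induction k with
      | zero =>
          intro x hx
          simp [gfun, gegenbauer_zero' _ hl]
      | succ j ih =>
          intro x hx
          rw [Function.iterate_succ_apply']
          rw [ladder_congr hN y ih]
          exact ladder_step y hn hy j hx
    exact main k x hx
end

section
/- Let x, y be nonzero real quaternions and k ∈ ℕ. Then the real part of the k-th power of x·(star y) satisfies Re((x·star y)^k) = (U_k(w) − w·U_{k−1}(w)) · (‖x‖‖y‖)^k, where U_j denotes the Chebyshev polynomial of the second kind (which equals the Gegenbauer polynomial C^1_j), with the convention U_{−1} = 0. -/
open scoped Quaternion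

open Polynomial Polynomial.Chebyshev in
lemma stmt10_aux (q : ℍ[ℝ]) (hq : q ≠ 0) (k : ℕ) :
    (q ^ k).re =
      ((U ℝ (k : ℤ)).eval (q.re / ‖q‖) -
          (q.re / ‖q‖) * (U ℝ ((k : ℤ) - 1)).eval (q.re / ‖q‖)) * ‖q‖ ^ k := by
  have hr : (0:ℝ) < ‖q‖ := norm_pos_iff.mpr hq
  have hsq : q * q = (2 * q.re : ℝ) • q - ((‖q‖ ^ 2 : ℝ) : ℍ[ℝ]) := by
    have h1 : q * star q = ((‖q‖ ^ 2 : ℝ) : ℍ[ℝ]) := by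
      rw [Quaternion.self_mul_star]; norm_cast; rw [Quaternion.normSq_eq_norm_mul_self, sq]
    have h2 : star q = ((2 * q.re : ℝ) : ℍ[ℝ]) - q := by
      rw [eq_sub_iff_add_eq, add_comm, Quaternion.self_add_star']
    calc q * q = q * (((2 * q.re : ℝ) : ℍ[ℝ]) - star q) := by rw [h2]; rw [sub_sub_cancel]
    _ = (2 * q.re : ℝ) • q - ((‖q‖ ^ 2 : ℝ) : ℍ[ℝ]) := by
        rw [mul_sub, h1, Quaternion.mul_coe_eq_smul]
  induction k using Nat.twoStepInduction with
  | zero => simp [Chebyshev.U_zero, Chebyshev.U_neg_one]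
  | one =>
      simp only [pow_one, Nat.cast_one, Chebyshev.U_one]
      norm_num [Chebyshev.U_zero]
      field_simp
      ring
  | more n ih1 ih2 =>
      have hpow : q ^ (n + 2) = ((2 * q.re : ℝ) • q - ((‖q‖ ^ 2 : ℝ) : ℍ[ℝ])) * q ^ n := by
        rw [show n+2 = 2+n by omega, pow_add, sq, hsq]
      have hre : (q ^ (n + 2)).re = 2 * q.re * (q ^ (n+1)).re - ‖q‖ ^ 2 * (q ^ n).re := by
        rw [hpow, sub_mul, smul_mul_assoc, Quaternion.coe_mul_eq_smul,
          Quaternion.re_sub, Quaternion.re_smul, Quaternion.re_smul]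
        rw [show q ^ (n+1) = q * q ^ n from pow_succ' q n, smul_eq_mul, smul_eq_mul]
      rw [hre, ih2, ih1]
      have hU2 := Chebyshev.U_add_two ℝ (n : ℤ)
      have hU1 := Chebyshev.U_add_two ℝ ((n : ℤ) - 1)
      have e2 := congrArg (Polynomial.eval (q.re / ‖q‖)) hU2
      have e1 := congrArg (Polynomial.eval (q.re / ‖q‖)) hU1
      simp only [Polynomial.eval_sub, Polynomial.eval_mul, Polynomial.eval_ofNat,
        Polynomial.eval_X] at e1 e2
      have hw : q.re / ‖q‖ * ‖q‖ = q.re := div_mul_cancel₀ _ hr.ne'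
      push_cast
      have h1 : ((n : ℤ) - 1 + 2) = (n : ℤ) + 1 := by ring
      rw [h1] at e1
      rw [show ((n : ℤ) + 2) = (n : ℤ) + 2 from rfl] at e2
      rw [e2, show ((n:ℤ) + 2 - 1) = (n:ℤ) + 1 from by ring, e1, sub_add_cancel (n:ℤ) 1]
      field_simp
      ring

/-- for nonzero quaternions `x, y`,
`Re((x·star y)^k) = (U_k(w) - w·U_{k-1}(w))·(‖x‖‖y‖)^k`, where
`w = Re(x·star y)/(‖x‖‖y‖)` and `U` is the Chebyshev polynomial of the second kind
(with `U_{-1} = 0`). -/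
theorem stmt10 (x y : ℍ[ℝ]) (hx : x ≠ 0) (hy : y ≠ 0) (k : ℕ) :
    ((x * star y) ^ k).re =
      ((Polynomial.Chebyshev.U ℝ (k : ℤ)).eval ((x * star y).re / (‖x‖ * ‖y‖)) -
          ((x * star y).re / (‖x‖ * ‖y‖)) *
            (Polynomial.Chebyshev.U ℝ ((k : ℤ) - 1)).eval ((x * star y).re / (‖x‖ * ‖y‖))) *
        (‖x‖ * ‖y‖) ^ k := by
  have hq : x * star y ≠ 0 := mul_ne_zero hx (star_ne_zero.mpr hy)
  have hn : ‖x * star y‖ = ‖x‖ * ‖y‖ := by rw [norm_mul, norm_star]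
  have := stmt10_aux (x * star y) hq k
  rwa [hn] at this
end

section
/- Let x, y be nonzero real quaternions such that x·(star y) ≠ y·(star x), and let k ∈ ℕ. Then (x·star y − y·star x)⁻¹ · ((x·star y)^{k+1} − (y·star x)^{k+1}) = U_k(w)·(‖x‖‖y‖)^k, where the right-hand side is a real scalar (viewed as a quaternion) and U_k is the Chebyshev polynomial of the second kind (equal to the Gegenbauer polynomial C^1_k). In particular this quaternion equals (1/(k+1))·Z^1_k(x,y), the zonal harmonic of degree k in ℝ⁴. -/
open scoped Quaternion

lemma stmt16_key (q : ℍ[ℝ]) (n : ℝ) (hn : n ≠ 0)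
    (hq : Quaternion.normSq q = n * n) :
    ∀ k : ℕ, q ^ (k + 1) - (star q) ^ (k + 1) =
      (q - star q) *
        (((Polynomial.Chebyshev.U ℝ (k : ℤ)).eval (q.re / n) * n ^ k : ℝ) : ℍ[ℝ]) := by
  have hcomm : q * star q = star q * q := by
    rw [Quaternion.self_mul_star, Quaternion.star_mul_self]
  have hmul : q * star q = ((n * n : ℝ) : ℍ[ℝ]) := by
    rw [Quaternion.self_mul_star, hq]
  have hadd : q + star q = ((2 * q.re : ℝ) : ℍ[ℝ]) := Quaternion.self_add_star' q
  have factor : ∀ r s a b : ℝ, ((r : ℝ) : ℍ[ℝ]) * ((q - star q) * (a : ℍ[ℝ]))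
      - ((s : ℝ) : ℍ[ℝ]) * ((q - star q) * (b : ℍ[ℝ]))
      = (q - star q) * ((r * a - s * b : ℝ) : ℍ[ℝ]) := by
    intro r s a b
    ext <;> simp <;> ring
  have H : ∀ k : ℕ,
      (q ^ (k + 1) - (star q) ^ (k + 1) =
        (q - star q) *
          (((Polynomial.Chebyshev.U ℝ (k : ℤ)).eval (q.re / n) * n ^ k : ℝ) : ℍ[ℝ])) ∧
      (q ^ (k + 2) - (star q) ^ (k + 2) =
        (q - star q) *
          (((Polynomial.Chebyshev.U ℝ ((k : ℤ) + 1)).eval (q.re / n) * n ^ (k + 1) : ℝ)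
            : ℍ[ℝ])) := by
    intro k
    induction k with
    | zero =>
      constructor
      · simp [Polynomial.Chebyshev.U_zero]
      · have h2 : q ^ 2 - (star q) ^ 2 = (q - star q) * (q + star q) := by
          rw [sq, sq, sub_mul, mul_add, mul_add, hcomm]
          abel
        rw [h2, hadd]
        refine congrArg _ (congrArg _ ?_)
        norm_num [Polynomial.Chebyshev.U_one]
        field_simp
    | succ m ih =>
      refine ⟨ih.2, ?_⟩
      have key : q ^ (m + 3) - (star q) ^ (m + 3) =
          (q + star q) * (q ^ (m + 2) - (star q) ^ (m + 2))
            - (q * star q) * (q ^ (m + 1) - (star q) ^ (m + 1)) := by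
        have e1 : q * star q * (star q) ^ (m + 1) = q * (star q) ^ (m + 2) := by
          rw [pow_succ' (star q) (m + 1), ← mul_assoc]
        have e2 : q * star q * q ^ (m + 1) = star q * q ^ (m + 2) := by
          rw [hcomm, pow_succ' q (m + 1), ← mul_assoc]
        rw [mul_sub, mul_sub, e1, e2, add_mul, add_mul]
        rw [show q * q ^ (m + 2) = q ^ (m + 3) by rw [← pow_succ']]
        rw [show star q * (star q) ^ (m + 2) = (star q) ^ (m + 3) by rw [← pow_succ']]
        abel
      have hcast : ((m + 1 : ℕ) : ℤ) + 1 = (m : ℤ) + 2 := by push_cast; ring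
      have hU := Polynomial.Chebyshev.U_add_two ℝ (m : ℤ)
      rw [key, ih.1, ih.2, hadd, hmul, hcast, hU, factor]
      refine congrArg _ (congrArg _ ?_)
      simp only [Polynomial.eval_sub, Polynomial.eval_mul, Polynomial.eval_ofNat,
        Polynomial.eval_X]
      field_simp
      ring
  intro k
  exact (H k).1

/-- for nonzero quaternions `x, y` with `x·star y ≠ y·star x`,
`(x·star y - y·star x)⁻¹ ((x·star y)^{k+1} - (y·star x)^{k+1})` is the real scalar
`U_k(w)(‖x‖‖y‖)^k`, which equals `(1/(k+1)) Z^1_k(x,y)`. -/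
theorem stmt16 (x y : ℍ[ℝ]) (hx : x ≠ 0) (hy : y ≠ 0)
    (h : x * star y ≠ y * star x) (k : ℕ) :
    (x * star y - y * star x)⁻¹ * ((x * star y) ^ (k + 1) - (y * star x) ^ (k + 1)) =
      (((Polynomial.Chebyshev.U ℝ (k : ℤ)).eval ((x * star y).re / (‖x‖ * ‖y‖)) *
          (‖x‖ * ‖y‖) ^ k : ℝ) : ℍ[ℝ]) ∧
    (x * star y - y * star x)⁻¹ * ((x * star y) ^ (k + 1) - (y * star x) ^ (k + 1)) =
      (((1 / ((k : ℝ) + 1)) * (((k : ℝ) + 1) *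
          (Polynomial.Chebyshev.U ℝ (k : ℤ)).eval ((x * star y).re / (‖x‖ * ‖y‖)) *
            (‖x‖ * ‖y‖) ^ k) : ℝ) : ℍ[ℝ]) := by
  set q := x * star y with hqdef
  have hc : y * star x = star q := by rw [hqdef, star_mul, star_star]
  have hn : ‖x‖ * ‖y‖ ≠ 0 :=
    mul_ne_zero (norm_ne_zero_iff.mpr hx) (norm_ne_zero_iff.mpr hy)
  have hnq : Quaternion.normSq q = (‖x‖ * ‖y‖) * (‖x‖ * ‖y‖) := by
    rw [Quaternion.normSq_eq_norm_mul_self]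
    have : ‖q‖ = ‖x‖ * ‖y‖ := by rw [hqdef, norm_mul, norm_star]
    rw [this]
  have hsub : q - star q ≠ 0 := by
    rw [hc] at h; exact sub_ne_zero_of_ne h
  have key := stmt16_key q (‖x‖ * ‖y‖) hn hnq k
  have main : (x * star y - y * star x)⁻¹ * ((x * star y) ^ (k + 1) - (y * star x) ^ (k + 1)) =
      (((Polynomial.Chebyshev.U ℝ (k : ℤ)).eval ((x * star y).re / (‖x‖ * ‖y‖)) *
          (‖x‖ * ‖y‖) ^ k : ℝ) : ℍ[ℝ]) := by
    rw [hc, key, inv_mul_cancel_left₀ hsub]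
  refine ⟨main, ?_⟩
  rw [main]
  congr 1
  have hk : ((k : ℝ) + 1) ≠ 0 := by positivity
  generalize (Polynomial.Chebyshev.U ℝ (k : ℤ)).eval ((x * star y).re / (‖x‖ * ‖y‖)) = E
  generalize (‖x‖ * ‖y‖) ^ k = P
  field_simp
end

section
/- Let x, y be real quaternions with x·(star y) ≠ y·(star x), and for j ∈ ℕ set S_j = (x·star y − y·star x)⁻¹ · ((x·star y)^j − (y·star x)^j). Then for every k ∈ ℕ, the real part of (x·star y)^k satisfies (as quaternions) Re((x·star y)^k) = S_{k+1} − ⟨x,y⟩·S_k, where ⟨x,y⟩ = Re(x·star y). -/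
open scoped Quaternion

/-- with `S_j = (x·star y - y·star x)⁻¹ ((x·star y)^j - (y·star x)^j)`,
one has `Re((x·star y)^k) = S_{k+1} - ⟨x,y⟩ S_k` as quaternions, where
`⟨x,y⟩ = Re(x·star y)`. -/
theorem stmt17 (x y : ℍ[ℝ]) (h : x * star y ≠ y * star x)
    (S : ℕ → ℍ[ℝ])
    (hS : ∀ j : ℕ, S j =
      (x * star y - y * star x)⁻¹ * ((x * star y) ^ j - (y * star x) ^ j))
    (k : ℕ) :
    ((((x * star y) ^ k).re : ℝ) : ℍ[ℝ]) =
      S (k + 1) - (((x * star y).re : ℝ) : ℍ[ℝ]) * S k := by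
  set a := x * star y with ha
  set b := y * star x with hbdef
  have hb : b = star a := by
    rw [ha, hbdef, star_mul, star_star]
  have hne : a - b ≠ 0 := sub_ne_zero.mpr h
  rw [hS, hS]
  -- pull the real coefficient inside
  rw [show ((a.re:ℝ):ℍ[ℝ]) * ((a - b)⁻¹ * (a ^ k - b ^ k))
      = (a - b)⁻¹ * (((a.re:ℝ):ℍ[ℝ]) * (a ^ k - b ^ k)) from by
    rw [← mul_assoc, Quaternion.coe_commutes, mul_assoc], ← mul_sub]
  refine (eq_inv_mul_iff_mul_eq₀ hne).mpr ?_
  -- now a pure ring identity after expressing re-coercions via star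
  have h2a : (2 : ℍ[ℝ]) * ((a.re : ℝ) : ℍ[ℝ]) = a + b := by
    rw [hb, Quaternion.self_add_star', Quaternion.coe_mul,
      show ((2:ℝ):ℍ[ℝ]) = 2 from by exact_mod_cast rfl]
  have h2k : (2 : ℍ[ℝ]) * (((a ^ k).re : ℝ) : ℍ[ℝ]) = a ^ k + b ^ k := by
    rw [hb, ← star_pow, Quaternion.self_add_star', Quaternion.coe_mul,
      show ((2:ℝ):ℍ[ℝ]) = 2 from by exact_mod_cast rfl]
  have h2 : (2 : ℍ[ℝ]) ≠ 0 := by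
    intro hh
    have := congrArg QuaternionAlgebra.re hh
    rw [show (2:ℍ[ℝ]) = ((2:ℝ):ℍ[ℝ]) from by exact_mod_cast rfl, Quaternion.re_coe] at this
    norm_num at this
  apply mul_left_cancel₀ h2
  calc (2 : ℍ[ℝ]) * ((a - b) * (((a ^ k).re : ℝ) : ℍ[ℝ]))
      = (a - b) * ((2 : ℍ[ℝ]) * (((a ^ k).re : ℝ) : ℍ[ℝ])) := by
        rw [← mul_assoc, ← mul_assoc]
        congr 1
        rw [two_mul, mul_two]
    _ = (a - b) * (a ^ k + b ^ k) := by rw [h2k]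
    _ = 2 * (a ^ (k+1) - b ^ (k+1)) - (a + b) * (a ^ k - b ^ k) := by
        rw [pow_succ', pow_succ']
        noncomm_ring
    _ = 2 * (a ^ (k+1) - b ^ (k+1)) - ((2 : ℍ[ℝ]) * ((a.re : ℝ) : ℍ[ℝ])) * (a ^ k - b ^ k) := by rw [h2a]
    _ = (2 : ℍ[ℝ]) * ((a ^ (k + 1) - b ^ (k + 1)) - ((a.re : ℝ) : ℍ[ℝ]) * (a ^ k - b ^ k)) := by
        noncomm_ring
end

section
/- Let x, y be nonzero real quaternions and k ∈ ℕ. Then (x·star y)^{k+1} = ( (x·star y)·U_k(w) − ‖x‖‖y‖·U_{k−1}(w) ) · (‖x‖‖y‖)^k, where U_j denotes the Chebyshev polynomial of the second kind, with the convention U_{−1} = 0, and the values U_j(w), ‖x‖, ‖y‖ are real scalars viewed as quaternions. -/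
open scoped Quaternion

/-- for nonzero quaternions `x, y`,
`(x·star y)^{k+1} = ((x·star y)·U_k(w) - ‖x‖‖y‖·U_{k-1}(w))·(‖x‖‖y‖)^k`,
with `w = Re(x·star y)/(‖x‖‖y‖)` and the convention `U_{-1} = 0`. -/
theorem stmt18 (x y : ℍ[ℝ]) (hx : x ≠ 0) (hy : y ≠ 0) (k : ℕ) :
    (x * star y) ^ (k + 1) =
      ((x * star y) *
          (((Polynomial.Chebyshev.U ℝ (k : ℤ)).eval
            ((x * star y).re / (‖x‖ * ‖y‖)) : ℝ) : ℍ[ℝ]) -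
        ((‖x‖ * ‖y‖ : ℝ) : ℍ[ℝ]) *
          (((Polynomial.Chebyshev.U ℝ ((k : ℤ) - 1)).eval
            ((x * star y).re / (‖x‖ * ‖y‖)) : ℝ) : ℍ[ℝ])) *
      ((((‖x‖ * ‖y‖) ^ k : ℝ)) : ℍ[ℝ]) := by
  set q : ℍ[ℝ] := x * star y with hq
  have ha : (0:ℝ) < ‖x‖ * ‖y‖ :=
    mul_pos (norm_pos_iff.mpr hx) (norm_pos_iff.mpr hy)
  set a : ℝ := ‖x‖ * ‖y‖ with haa
  set w : ℝ := q.re / a with hw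
  have hre : q.re = w * a := by rw [hw, div_mul_cancel₀ _ ha.ne']
  have hna : ‖q‖ = a := by rw [hq, norm_mul, norm_star, haa]
  have hcoe : ∀ r : ℝ, ((r : ℝ) : ℍ[ℝ]) = r • (1 : ℍ[ℝ]) := by
    intro r; rw [← Quaternion.coe_mul_eq_smul, mul_one]
  have hsq : q * q = (2 * q.re) • q - (a ^ 2) • (1 : ℍ[ℝ]) := by
    have h1 : q * star q = ((Quaternion.normSq q : ℝ) : ℍ[ℝ]) := q.self_mul_star
    rw [Quaternion.star_eq_two_re_sub, mul_sub, Quaternion.mul_coe_eq_smul,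
      sub_eq_iff_eq_add'] at h1
    have h2 : ((Quaternion.normSq q : ℝ) : ℍ[ℝ]) = (a ^ 2) • (1 : ℍ[ℝ]) := by
      rw [Quaternion.normSq_eq_norm_mul_self, hna, hcoe, sq]
    rw [eq_sub_iff_add_eq, ← h2, h1]
  induction k with
  | zero =>
      simp [Polynomial.Chebyshev.U_zero, Polynomial.Chebyshev.U_neg_one]
  | succ k IH =>
      have hU : (Polynomial.Chebyshev.U ℝ ((k:ℤ) + 1)).eval w =
          2 * w * (Polynomial.Chebyshev.U ℝ (k:ℤ)).eval w -
            (Polynomial.Chebyshev.U ℝ ((k:ℤ) - 1)).eval w := by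
        have := Polynomial.Chebyshev.U_add_two ℝ ((k:ℤ) - 1)
        rw [show (k:ℤ) - 1 + 2 = (k:ℤ) + 1 by ring, show (k:ℤ) - 1 + 1 = (k:ℤ) by ring] at this
        simp [this]
      rw [pow_succ, IH]
      simp only [Nat.cast_add, Nat.cast_one, add_sub_cancel_right]
      rw [hU]
      simp only [hcoe, smul_mul_assoc, mul_smul_comm, one_mul, mul_one, sub_mul, smul_sub]
      rw [hsq, hre]
      match_scalars <;> ring
end

section
/- Let k, r ∈ ℕ with 2r ≤ k. Then ∑_{ℓ=0}^{⌊k/2⌋−r} binom(k+1, 2(r+ℓ)+1) · binom(r+ℓ, ℓ) = 2^{k−2r} · binom(k−r, r). -/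
open Finset

/-- odd-index weighted sum -/
def Tsum (n r : ℕ) : ℕ := ∑ m ∈ Finset.range (n+1), Nat.choose n (2*m+1) * Nat.choose m r

/-- even-index weighted sum -/
def Usum (n r : ℕ) : ℕ := ∑ m ∈ Finset.range (n+1), Nat.choose n (2*m) * Nat.choose m r

lemma Tsum_vanish (n r : ℕ) (h : n ≤ 2*r) : Tsum n r = 0 := by
  apply Finset.sum_eq_zero
  intro m _
  rcases le_or_gt r m with hm | hm
  · have : n < 2*m+1 := by omega
    simp [Nat.choose_eq_zero_of_lt this]
  · simp [Nat.choose_eq_zero_of_lt hm]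

lemma Usum_diag (r : ℕ) : Usum (2*r) r = 1 := by
  unfold Usum
  rw [Finset.sum_eq_single r]
  · simp [Nat.choose_self]
  · intro m _ hmr
    rcases lt_or_gt_of_ne hmr with hm | hm
    · simp [Nat.choose_eq_zero_of_lt hm]
    · have : 2*r < 2*m := by omega
      simp [Nat.choose_eq_zero_of_lt this]
  · intro hr
    exact absurd (Finset.mem_range.mpr (by omega)) hr

lemma R1 (n r : ℕ) : Tsum (n+1) r = Tsum n r + Usum n r := by
  unfold Tsum Usum
  have hc : ∀ m ∈ Finset.range (n+2),
      Nat.choose (n+1) (2*m+1) * Nat.choose m r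
        = Nat.choose n (2*m) * Nat.choose m r + Nat.choose n (2*m+1) * Nat.choose m r := by
    intro m _
    rw [Nat.choose_succ_succ, add_mul]
  rw [Finset.sum_congr rfl hc, Finset.sum_add_distrib]
  have e1 : ∑ m ∈ Finset.range (n+2), Nat.choose n (2*m) * Nat.choose m r
      = ∑ m ∈ Finset.range (n+1), Nat.choose n (2*m) * Nat.choose m r := by
    rw [Finset.sum_range_succ, Nat.choose_eq_zero_of_lt (by omega), zero_mul, add_zero]
  have e2 : ∑ m ∈ Finset.range (n+2), Nat.choose n (2*m+1) * Nat.choose m r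
      = ∑ m ∈ Finset.range (n+1), Nat.choose n (2*m+1) * Nat.choose m r := by
    rw [Finset.sum_range_succ, Nat.choose_eq_zero_of_lt (by omega), zero_mul, add_zero]
  rw [e1, e2, add_comm]

lemma R2 (n r : ℕ) :
    Usum (n+1) r = (∑ m ∈ Finset.range (n+1), Nat.choose n (2*m+1) * Nat.choose (m+1) r)
      + Usum n r := by
  unfold Usum
  rw [Finset.sum_range_succ' (fun m => Nat.choose (n+1) (2*m) * Nat.choose m r)]
  have h1 : ∀ m ∈ Finset.range (n+1),
      Nat.choose (n+1) (2*(m+1)) * Nat.choose (m+1) r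
        = Nat.choose n (2*m+1) * Nat.choose (m+1) r
          + Nat.choose n (2*(m+1)) * Nat.choose (m+1) r := by
    intro m _
    have : 2*(m+1) = (2*m+1) + 1 := by ring
    rw [this, Nat.choose_succ_succ, add_mul]
  rw [Finset.sum_congr rfl h1, Finset.sum_add_distrib]
  have h2 : ∑ m ∈ Finset.range (n+1), Nat.choose n (2*m) * Nat.choose m r
      = (∑ m ∈ Finset.range n, Nat.choose n (2*(m+1)) * Nat.choose (m+1) r)
        + Nat.choose n 0 * Nat.choose 0 r := by
    rw [← Finset.sum_range_succ' (fun m => Nat.choose n (2*m) * Nat.choose m r)]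
  rw [h2]
  have h3 : ∑ m ∈ Finset.range (n+1), Nat.choose n (2*(m+1)) * Nat.choose (m+1) r
      = ∑ m ∈ Finset.range n, Nat.choose n (2*(m+1)) * Nat.choose (m+1) r := by
    rw [Finset.sum_range_succ, Nat.choose_eq_zero_of_lt (by omega), zero_mul, add_zero]
  rw [h3]
  simp [Nat.choose_zero_right]
  ring

/-- key recurrence -/
lemma L1 (n r : ℕ) : Tsum (n+2) (r+1) = 2 * Tsum (n+1) (r+1) + Tsum n r := by
  have h1 : Tsum (n+2) (r+1) = Tsum (n+1) (r+1) + Usum (n+1) (r+1) := R1 (n+1) (r+1)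
  have h3 := R1 n (r+1)
  have h2 := R2 n (r+1)
  have h4 : (∑ m ∈ Finset.range (n+1), Nat.choose n (2*m+1) * Nat.choose (m+1) (r+1))
      = Tsum n r + Tsum n (r+1) := by
    unfold Tsum
    rw [← Finset.sum_add_distrib]
    apply Finset.sum_congr rfl
    intro m _
    rw [Nat.choose_succ_succ, mul_add]
  rw [h4] at h2
  omega

lemma base0 (t : ℕ) : Tsum (t+1) 0 = 2^t ∧ Usum (t+1) 0 = 2^t := by
  induction t with
  | zero => constructor <;> decide
  | succ t ih =>
    have h1 : Tsum (t+2) 0 = Tsum (t+1) 0 + Usum (t+1) 0 := R1 (t+1) 0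
    have h2 : Usum (t+2) 0 = (∑ m ∈ Finset.range (t+2), Nat.choose (t+1) (2*m+1) * Nat.choose (m+1) 0) + Usum (t+1) 0 := R2 (t+1) 0
    have h4 : (∑ m ∈ Finset.range (t+2), Nat.choose (t+1) (2*m+1) * Nat.choose (m+1) 0)
        = Tsum (t+1) 0 := by
      unfold Tsum
      apply Finset.sum_congr rfl
      intro m _
      simp
    rw [h4] at h2
    constructor
    · rw [h1, ih.1, ih.2]; ring
    · rw [h2, h1] at *; rw [ih.1, ih.2]; ring

lemma main (r : ℕ) : ∀ t : ℕ, Tsum (2*r+1+t) r = 2^t * Nat.choose (r+t) r := by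
  induction r with
  | zero =>
    intro t
    have := (base0 t).1
    simp only [Nat.mul_zero, Nat.zero_add, Nat.choose_zero_right] at *
    rw [show 0+1+t = t+1 by ring, this, mul_one]
  | succ r ih =>
    intro t
    induction t with
    | zero =>
      have h1 := R1 (2*(r+1)) (r+1)
      have h0 : Tsum (2*(r+1)) (r+1) = 0 := Tsum_vanish _ _ (by omega)
      rw [show 2*(r+1)+1+0 = 2*(r+1)+1 by ring, h1, h0, Usum_diag (r+1)]
      simp
    | succ t iht =>
      have hL := L1 (2*r+2+t) r
      have hO : Tsum (2*r+2+t) r = 2^(t+1) * Nat.choose (r+(t+1)) r := by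
        have := ih (t+1)
        rw [show 2*r+1+(t+1) = 2*r+2+t by ring] at this
        exact this
      rw [show 2*(r+1)+1+t = 2*r+2+t+1 by ring] at iht
      rw [show 2*(r+1)+1+(t+1) = (2*r+2+t)+2 by ring, hL, iht, hO]
      have hp : Nat.choose (r+1+(t+1)) (r+1)
          = Nat.choose (r+1+t) r + Nat.choose (r+1+t) (r+1) := by
        rw [show r+1+(t+1) = (r+1+t)+1 by ring]
        exact Nat.choose_succ_succ _ _
      rw [hp]
      have : r+(t+1) = r+1+t := by ring
      rw [this]
      ring

/-- for `2r ≤ k`,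
`∑_{ℓ=0}^{⌊k/2⌋-r} C(k+1, 2(r+ℓ)+1) C(r+ℓ, ℓ) = 2^{k-2r} C(k-r, r)`. -/
theorem stmt19 (k r : ℕ) (h : 2 * r ≤ k) :
    ∑ l ∈ Finset.range (k / 2 - r + 1),
      Nat.choose (k + 1) (2 * (r + l) + 1) * Nat.choose (r + l) l =
      2 ^ (k - 2 * r) * Nat.choose (k - r) r := by
  have hm := main r (k - 2*r)
  rw [show 2*r+1+(k-2*r) = k+1 by omega, show r+(k-2*r) = k-r by omega] at hm
  rw [← hm]
  have hsym : ∀ l : ℕ, Nat.choose (r+l) l = Nat.choose (r+l) r := by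
    intro l
    have := Nat.choose_symm (show r ≤ r+l by omega)
    rw [show r+l-r = l by omega] at this
    exact this
  have hsplit : Tsum (k+1) r
      = ∑ l ∈ Finset.range (k+2-r), Nat.choose (k+1) (2*(r+l)+1) * Nat.choose (r+l) r := by
    have hIco : ∑ m ∈ Finset.Ico r (k+2), Nat.choose (k+1) (2*m+1) * Nat.choose m r
        = ∑ l ∈ Finset.range (k+2-r), Nat.choose (k+1) (2*(r+l)+1) * Nat.choose (r+l) r := by
      rw [Finset.sum_Ico_eq_sum_range]
    rw [← hIco]
    unfold Tsum
    rw [Finset.range_eq_Ico,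
        ← Finset.sum_Ico_consecutive _ (Nat.zero_le r) (by omega : r ≤ k+2)]
    have hz : ∑ m ∈ Finset.Ico 0 r, Nat.choose (k+1) (2*m+1) * Nat.choose m r = 0 := by
      apply Finset.sum_eq_zero
      intro m hmm
      rw [Finset.mem_Ico] at hmm
      simp [Nat.choose_eq_zero_of_lt hmm.2]
    rw [hz, zero_add]
  rw [hsplit]
  have hcongr : ∑ l ∈ Finset.range (k/2 - r + 1),
      Nat.choose (k+1) (2*(r+l)+1) * Nat.choose (r+l) l
      = ∑ l ∈ Finset.range (k/2 - r + 1),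
      Nat.choose (k+1) (2*(r+l)+1) * Nat.choose (r+l) r :=
    Finset.sum_congr rfl (fun l _ => by rw [hsym])
  rw [hcongr]
  apply Finset.sum_subset
  · intro x hx
    simp only [Finset.mem_range] at hx ⊢
    clear hm hsym hsplit hcongr
    omega
  · intro x hx hx2
    simp only [Finset.mem_range] at hx hx2
    have : k+1 < 2*(r+x)+1 := by clear hm hsym hsplit hcongr; omega
    simp [Nat.choose_eq_zero_of_lt this]
end
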